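/- Let d ≥ 1 be an integer, 0 < α < 1/2, and δ, K > 0. Suppose U is continuously differentiable on (0,δ] with (1/2)r − U(r) > 0, |U'(r) + (d−1)U(r)/r − dα| ≤ K r^{dα} and |U(r) − αr| ≤ K r^{1+dα} for all r ∈ (0,δ]. Define P(r) := P_δ · exp(−∫_r^δ (U'(s) + (d−1)U(s)/s)/(s/2 − U(s)) ds) for a given P_δ > 0. Then there exist a constant c > 0 and a constant C > 0 (depending on d, α, K, δ) such that for all r ∈ (0,δ]: |P(r) − c·P_δ·(r/δ)^{2dα/(1−2α)}| ≤ C·P_δ·(r/δ)^{2dα/(1−2α)}·r^{dα}. In particular, P extends to a function on [0,δ] with P(0) = 0 that is Hölder continuous of exponent 2dα/(1−2α) at the origin. -/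

import Mathlib

open Real MeasureTheory Filter Set
open scoped Topology

noncomputable section

lemma aux_abs_exp_sub_one (x : ℝ) : |Real.exp x - 1| ≤ |x| * Real.exp |x| := by
  have hmul : Real.exp (-x) * Real.exp x = 1 := by rw [← Real.exp_add]; simp
  rcases le_or_gt 0 x with h | h
  · rw [abs_of_nonneg h, abs_of_nonneg (by linarith [Real.one_le_exp h] : (0:ℝ) ≤ Real.exp x - 1)]
    nlinarith [Real.add_one_le_exp (-x), Real.exp_pos x]
  · rw [abs_of_neg h, abs_of_nonpos (by linarith [Real.exp_lt_one_iff.mpr h] : Real.exp x - 1 ≤ 0)]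
    nlinarith [Real.add_one_le_exp x, Real.one_le_exp (by linarith : (0:ℝ) ≤ -x)]

/-- `P(r) = P_δ exp(−∫_r^δ (U'+(d−1)U/s)/(s/2−U) ds)`, written as an oriented
interval integral from `δ` to `r`. -/
def Pvac (d : ℕ) (δ Pδ : ℝ) (U : ℝ → ℝ) (r : ℝ) : ℝ :=
  Pδ * Real.exp (∫ s in δ..r, (deriv U s + ((d : ℝ) - 1) * U s / s) / (s / 2 - U s))

set_option maxHeartbeats 1000000 in
/-- Power-law expansion of the cavitating density at the origin:
`P(r) = c P_δ (r/δ)^{2dα/(1−2α)} (1 + O(r^{dα}))`; in particular `P(0⁺) = 0` and `P` is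
Hölder continuous of exponent `2dα/(1−2α)` at the origin. -/
theorem vacuum_density_holder
    (d : ℕ) (hd : 1 ≤ d) (α δ K Pδ : ℝ)
    (hα0 : 0 < α) (hα : α < 1/2) (hδ : 0 < δ) (hK : 0 < K) (hPδ : 0 < Pδ)
    (U : ℝ → ℝ) (hU : ContDiffOn ℝ 1 U (Ioc 0 δ))
    (hpos : ∀ r ∈ Ioc (0:ℝ) δ, 0 < (1/2) * r - U r)
    (h1 : ∀ r ∈ Ioc (0:ℝ) δ,
      |deriv U r + ((d : ℝ) - 1) * U r / r - (d : ℝ) * α| ≤ K * r ^ ((d : ℝ) * α))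
    (h2 : ∀ r ∈ Ioc (0:ℝ) δ, |U r - α * r| ≤ K * r ^ (1 + (d : ℝ) * α)) :
    ∃ c > (0:ℝ), ∃ C > (0:ℝ),
      (∀ r ∈ Ioc (0:ℝ) δ,
        |Pvac d δ Pδ U r - c * Pδ * (r / δ) ^ (2 * (d : ℝ) * α / (1 - 2 * α))|
          ≤ C * Pδ * (r / δ) ^ (2 * (d : ℝ) * α / (1 - 2 * α)) * r ^ ((d : ℝ) * α)) ∧
      Tendsto (Pvac d δ Pδ U) (𝓝[>] (0:ℝ)) (𝓝 0) ∧
      ∀ r ∈ Ioc (0:ℝ) δ,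
        |Pvac d δ Pδ U r| ≤ C * Pδ * r ^ (2 * (d : ℝ) * α / (1 - 2 * α)) := by
  have hd1 : (1:ℝ) ≤ (d:ℝ) := by exact_mod_cast hd
  set a : ℝ := (d : ℝ) * α with ha_def
  clear_value a
  have ha : 0 < a := by rw [ha_def]; exact mul_pos (by linarith) hα0
  have h2α : 0 < 1 - 2 * α := by linarith
  set β : ℝ := 2 * (d : ℝ) * α / (1 - 2 * α) with hβ_def
  clear_value β
  have hβ : 0 < β := by
    rw [hβ_def]; exact div_pos (by nlinarith) h2α
  have hβa : β * (1/2 - α) = a := by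
    rw [hβ_def, ha_def]; field_simp
  set f : ℝ → ℝ := fun s => (deriv U s + ((d : ℝ) - 1) * U s / s) / (s / 2 - U s) with hf_def
  clear_value f
  -- Lemma A : uniform lower bound on the denominator
  obtain ⟨m, hm, hmD⟩ : ∃ m > 0, ∀ s ∈ Ioc (0:ℝ) δ, m * s ≤ s / 2 - U s := by
    have hεpos : 0 < (1/2 - α) / 2 := by linarith
    set ε : ℝ := (1/2 - α) / 2 with hε_def
    set s₀ : ℝ := min δ ((ε / K) ^ (1/a)) with hs₀_def
    have hs₀pos : 0 < s₀ := lt_min hδ (Real.rpow_pos_of_pos (by positivity) _)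
    have hs₀δ : s₀ ≤ δ := min_le_left _ _
    have hsmall : ∀ s ∈ Ioc (0:ℝ) s₀, ε * s ≤ s / 2 - U s := by
      intro s hs
      have hs0 : 0 < s := hs.1
      have hsδ : s ∈ Ioc (0:ℝ) δ := ⟨hs0, hs.2.trans hs₀δ⟩
      have hKs : K * s ^ a ≤ ε := by
        have h1' : s ^ a ≤ ((ε/K) ^ (1/a)) ^ a :=
          Real.rpow_le_rpow hs0.le (hs.2.trans (min_le_right _ _)) ha.le
        have h2' : ((ε/K) ^ (1/a : ℝ)) ^ a = ε / K := by
          rw [← Real.rpow_mul (by positivity), one_div, inv_mul_cancel₀ ha.ne', Real.rpow_one]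
        rw [h2'] at h1'
        calc K * s ^ a ≤ K * (ε / K) := by nlinarith
          _ = ε := by field_simp
      have hU2 := (abs_le.mp (h2 s hsδ)).2
      have hpow : s ^ (1 + a) = s * s ^ a := by
        rw [Real.rpow_add hs0, Real.rpow_one]
      nlinarith [mul_le_mul_of_nonneg_left hKs hs0.le]
    have hDcont : ContinuousOn (fun s => s / 2 - U s) (Icc s₀ δ) := by
      exact (continuousOn_id.div_const 2).sub (hU.continuousOn.mono
        (fun x hx => ⟨lt_of_lt_of_le hs₀pos hx.1, hx.2⟩))
    obtain ⟨x, hx, hxmin⟩ := isCompact_Icc.exists_isMinOn (nonempty_Icc.mpr hs₀δ) hDcont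
    have hm₁ : 0 < x / 2 - U x := by
      have := hpos x ⟨hs₀pos.trans_le hx.1, hx.2⟩; linarith
    refine ⟨min ε ((x / 2 - U x) / δ), lt_min hεpos (by positivity), ?_⟩
    intro s hs
    rcases le_or_gt s s₀ with h | h
    · calc min ε ((x / 2 - U x) / δ) * s ≤ ε * s :=
          mul_le_mul_of_nonneg_right (min_le_left _ _) hs.1.le
        _ ≤ s / 2 - U s := hsmall s ⟨hs.1, h⟩
    · have hsIcc : s ∈ Icc s₀ δ := ⟨h.le, hs.2⟩
      calc min ε ((x / 2 - U x) / δ) * s ≤ (x / 2 - U x) / δ * δ :=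
          mul_le_mul (min_le_right _ _) hs.2 hs.1.le (by positivity)
        _ = x / 2 - U x := by field_simp
        _ ≤ s / 2 - U s := hxmin hsIcc
  -- Lemma B : pointwise estimate on f - β/s
  set C' : ℝ := K * (1 + β) / m with hC'_def
  clear_value C'
  have hC' : 0 < C' := by rw [hC'_def]; positivity
  have hfg : ∀ s ∈ Ioc (0:ℝ) δ, |f s - β * s⁻¹| ≤ C' * s ^ (a - 1) := by
    intro s hs
    have hs0 : 0 < s := hs.1
    have hD : 0 < s / 2 - U s := by have := hpos s hs; linarith
    have hmD' := hmD s hs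
    rw [hC'_def]
    simp only [hf_def]
    set N := deriv U s + ((d : ℝ) - 1) * U s / s with hN_def
    have key : N / (s / 2 - U s) - β * s⁻¹
        = ((N - a) + β * (U s / s - α)) / (s / 2 - U s) := by
      have h0 : (N - a) + β * (U s / s - α) = N - β * s⁻¹ * (s / 2 - U s) := by
        rw [← hβa]; field_simp; ring
      rw [h0, sub_div, mul_div_cancel_right₀ _ hD.ne']
    rw [key, abs_div, abs_of_pos hD]
    have hb2 : |U s / s - α| ≤ K * s ^ a := by
      have heq : U s / s - α = (U s - α * s) / s := by field_simp
      rw [heq, abs_div, abs_of_pos hs0, div_le_iff₀ hs0]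
      calc |U s - α * s| ≤ K * s ^ (1 + a) := h2 s hs
        _ = K * s ^ a * s := by rw [Real.rpow_add hs0, Real.rpow_one]; ring
    have hnum : |(N - a) + β * (U s / s - α)| ≤ K * (1 + β) * s ^ a := by
      calc |(N - a) + β * (U s / s - α)| ≤ |N - a| + |β * (U s / s - α)| := abs_add_le _ _
        _ = |N - a| + β * |U s / s - α| := by rw [abs_mul, abs_of_pos hβ]
        _ ≤ K * s ^ a + β * (K * s ^ a) := add_le_add (h1 s hs)
            (mul_le_mul_of_nonneg_left hb2 hβ.le)
        _ = K * (1 + β) * s ^ a := by ring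
    calc |(N - a) + β * (U s / s - α)| / (s / 2 - U s)
        ≤ (K * (1 + β) * s ^ a) / (s / 2 - U s) := by gcongr
      _ ≤ (K * (1 + β) * s ^ a) / (m * s) := by gcongr
      _ = K * (1 + β) / m * s ^ (a - 1) := by
          rw [Real.rpow_sub hs0, Real.rpow_one]
          field_simp
  set g : ℝ → ℝ := fun s => f s - β * s⁻¹ with hg_def
  clear_value g
  have hg_app : ∀ s, g s = f s - β * s⁻¹ := fun s => by rw [hg_def]
  -- measurability and integrability of g on (0, δ]
  have hgmeas : AEStronglyMeasurable g (volume.restrict (Ioc (0:ℝ) δ)) := by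
    rw [hg_def]
    simp only [hf_def]
    have hUm : AEMeasurable U (volume.restrict (Ioc (0:ℝ) δ)) :=
      hU.continuousOn.aemeasurable measurableSet_Ioc
    have hfm : AEMeasurable
        (fun s => (deriv U s + ((d : ℝ) - 1) * U s / s) / (s / 2 - U s))
        (volume.restrict (Ioc (0:ℝ) δ)) := by
      exact (((measurable_deriv U).aemeasurable.add
        ((aemeasurable_const.mul hUm).div aemeasurable_id)).div
        ((aemeasurable_id.div_const 2).sub hUm))
    exact (hfm.sub (aemeasurable_const.mul aemeasurable_id.inv)).aestronglyMeasurable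
  have hrpow_int : ∀ r ∈ Ioc (0:ℝ) δ, IntegrableOn (fun s : ℝ => C' * s ^ (a - 1)) (Ioc 0 r) := by
    intro r hr
    have := (intervalIntegral.intervalIntegrable_rpow' (a := (0:ℝ)) (b := r)
      (by linarith : (-1:ℝ) < a - 1)).const_mul C'
    rwa [intervalIntegrable_iff_integrableOn_Ioc_of_le hr.1.le] at this
  have hgint : ∀ r ∈ Ioc (0:ℝ) δ, IntegrableOn g (Ioc 0 r) := by
    intro r hr
    refine Integrable.mono' (hrpow_int r hr) (hgmeas.mono_measure
      (Measure.restrict_mono (Ioc_subset_Ioc_right hr.2) le_rfl)) ?_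
    filter_upwards [ae_restrict_mem measurableSet_Ioc] with s hs
    rw [Real.norm_eq_abs, hg_app]
    exact hfg s ⟨hs.1, hs.2.trans hr.2⟩
  set G : ℝ → ℝ := fun r => ∫ s in (0:ℝ)..r, g s with hG_def
  clear_value G
  have hG_app : ∀ r, G r = ∫ s in (0:ℝ)..r, g s := fun r => by rw [hG_def]
  have hgII : ∀ r ∈ Ioc (0:ℝ) δ, IntervalIntegrable g volume 0 r := by
    intro r hr
    rw [intervalIntegrable_iff_integrableOn_Ioc_of_le hr.1.le]
    exact hgint r hr
  have hGbound : ∀ r ∈ Ioc (0:ℝ) δ, |G r| ≤ C' / a * r ^ a := by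
    intro r hr
    have h0r : (0:ℝ) ≤ r := hr.1.le
    have hbound_int : IntervalIntegrable (fun s : ℝ => C' * s ^ (a - 1)) volume 0 r := by
      rw [intervalIntegrable_iff_integrableOn_Ioc_of_le h0r]; exact hrpow_int r hr
    have hbd : ∀ᵐ t ∂volume.restrict (Set.uIoc (0:ℝ) r), ‖g t‖ ≤ C' * t ^ (a - 1) := by
      rw [uIoc_of_le h0r]
      filter_upwards [ae_restrict_mem measurableSet_Ioc] with t ht
      rw [Real.norm_eq_abs, hg_app]
      exact hfg t ⟨ht.1, ht.2.trans hr.2⟩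
    have hle := intervalIntegral.norm_integral_le_abs_of_norm_le hbd hbound_int
    have hval : (∫ t in (0:ℝ)..r, C' * t ^ (a - 1)) = C' / a * r ^ a := by
      rw [intervalIntegral.integral_const_mul, integral_rpow (Or.inl (by linarith))]
      rw [show a - 1 + 1 = a by ring, Real.zero_rpow ha.ne']
      ring
    rw [hG_app]
    calc |∫ s in (0:ℝ)..r, g s| ≤ |∫ t in (0:ℝ)..r, C' * t ^ (a - 1)| := hle
      _ = C' / a * r ^ a := by rw [hval, abs_of_nonneg (by positivity)]
  -- explicit formula for Pvac
  have hPval : ∀ r ∈ Ioc (0:ℝ) δ,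
      Pvac d δ Pδ U r = Pδ * (r / δ) ^ β * Real.exp (G r - G δ) := by
    intro r hr
    have hr0 : 0 < r := hr.1
    have hrδ : r ≤ δ := hr.2
    have hinv_int : IntervalIntegrable (fun s : ℝ => β * s⁻¹) volume r δ := by
      apply ContinuousOn.intervalIntegrable
      apply continuousOn_const.mul
      apply ContinuousOn.inv₀ continuousOn_id
      intro x hx
      rw [uIcc_of_le hrδ] at hx
      exact (hr0.trans_le hx.1).ne'
    have hg_int : IntervalIntegrable g volume r δ := by
      rw [intervalIntegrable_iff_integrableOn_Ioc_of_le hrδ]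
      exact (hgint δ ⟨hδ, le_rfl⟩).mono_set (Ioc_subset_Ioc_left hr0.le)
    have hfsplit : ∀ s : ℝ, f s = β * s⁻¹ + g s := fun s => by
      rw [hg_app]; ring
    have hint1 : (∫ s in r..δ, f s) = (∫ s in r..δ, β * s⁻¹) + ∫ s in r..δ, g s := by
      simp only [hfsplit]
      exact intervalIntegral.integral_add hinv_int hg_int
    have hint2 : (∫ s in r..δ, β * s⁻¹) = β * (Real.log δ - Real.log r) := by
      rw [intervalIntegral.integral_const_mul, integral_inv_of_pos hr0 hδ,
        Real.log_div hδ.ne' hr0.ne']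
    have hint3 : (∫ s in r..δ, g s) = G δ - G r := by
      have := intervalIntegral.integral_add_adjacent_intervals (hgII r hr) hg_int
      simp only [hG_app]
      linarith [this]
    have hPv : Pvac d δ Pδ U r = Pδ * Real.exp (∫ s in δ..r, f s) := by
      simp only [Pvac, hf_def]
    have hsymm : (∫ s in δ..r, f s) = -(∫ s in r..δ, f s) := by
      rw [intervalIntegral.integral_symm]
    rw [hPv, hsymm, hint1, hint2, hint3]
    have hrd_pos : 0 < r / δ := div_pos hr0 hδ
    rw [Real.rpow_def_of_pos hrd_pos, Real.log_div hr0.ne' hδ.ne']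
    rw [mul_assoc, ← Real.exp_add]
    congr 1
    ring
  -- assemble
  set c : ℝ := Real.exp (-G δ) with hc_def
  clear_value c
  have hc : 0 < c := by rw [hc_def]; exact Real.exp_pos _
  set M : ℝ := C' / a with hM_def
  clear_value M
  have hM : 0 < M := by rw [hM_def]; exact div_pos hC' ha
  set E : ℝ := Real.exp (M * δ ^ a) with hE_def
  clear_value E
  have hE1 : 1 ≤ E := by
    rw [hE_def]; exact Real.one_le_exp (by positivity)
  have hGδa : ∀ r ∈ Ioc (0:ℝ) δ, |G r| ≤ M * δ ^ a := by
    intro r hr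
    refine (hGbound r hr).trans ?_
    have h' : r ^ a ≤ δ ^ a := Real.rpow_le_rpow hr.1.le hr.2 ha.le
    rw [hM_def] at *
    nlinarith [div_pos hC' ha]
  have hexp_diff : ∀ r ∈ Ioc (0:ℝ) δ, |Real.exp (G r) - 1| ≤ M * r ^ a * E := by
    intro r hr
    rw [hE_def]
    calc |Real.exp (G r) - 1| ≤ |G r| * Real.exp |G r| := aux_abs_exp_sub_one _
      _ ≤ (M * r ^ a) * Real.exp (M * δ ^ a) := by
          exact mul_le_mul (hGbound r hr) (Real.exp_le_exp.mpr (hGδa r hr))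
            (Real.exp_pos _).le (mul_nonneg hM.le (Real.rpow_nonneg hr.1.le _))
  have hmain : ∀ r ∈ Ioc (0:ℝ) δ,
      |Pvac d δ Pδ U r - c * Pδ * (r / δ) ^ β|
        ≤ (c * M * E + c * E / δ ^ β + 1) * Pδ * (r / δ) ^ β * r ^ a := by
    intro r hr
    have hr0 : 0 < r := hr.1
    have hX : (0:ℝ) < (r / δ) ^ β := Real.rpow_pos_of_pos (div_pos hr0 hδ) _
    have hra : (0:ℝ) ≤ r ^ a := Real.rpow_nonneg hr0.le _
    have hdiff : Pvac d δ Pδ U r - c * Pδ * (r / δ) ^ β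
        = c * Pδ * (r / δ) ^ β * (Real.exp (G r) - 1) := by
      rw [hPval r hr, hc_def, show G r - G δ = -G δ + G r by ring, Real.exp_add]
      ring
    rw [hdiff, abs_mul, abs_of_pos (mul_pos (mul_pos hc hPδ) hX)]
    calc c * Pδ * (r / δ) ^ β * |Real.exp (G r) - 1|
        ≤ c * Pδ * (r / δ) ^ β * (M * r ^ a * E) :=
          mul_le_mul_of_nonneg_left (hexp_diff r hr) (mul_pos (mul_pos hc hPδ) hX).le
      _ = (c * M * E) * (Pδ * ((r / δ) ^ β * r ^ a)) := by ring
      _ ≤ (c * M * E + c * E / δ ^ β + 1) * (Pδ * ((r / δ) ^ β * r ^ a)) := by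
          refine mul_le_mul_of_nonneg_right ?_
            (mul_nonneg hPδ.le (mul_nonneg hX.le hra))
          have h1' : (0:ℝ) < c * E / δ ^ β :=
            div_pos (mul_pos hc (lt_of_lt_of_le one_pos hE1)) (Real.rpow_pos_of_pos hδ β)
          linarith
      _ = (c * M * E + c * E / δ ^ β + 1) * Pδ * (r / δ) ^ β * r ^ a := by ring
  have hglob : ∀ r ∈ Ioc (0:ℝ) δ,
      |Pvac d δ Pδ U r| ≤ (c * M * E + c * E / δ ^ β + 1) * Pδ * r ^ β := by
    intro r hr
    have hr0 : 0 < r := hr.1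
    have hrb : (0:ℝ) ≤ r ^ β := Real.rpow_nonneg hr0.le _
    have habs : |Pvac d δ Pδ U r| = Pδ * (r / δ) ^ β * Real.exp (G r - G δ) := by
      rw [hPval r hr]
      exact abs_of_pos (mul_pos (mul_pos hPδ
        (Real.rpow_pos_of_pos (div_pos hr0 hδ) _)) (Real.exp_pos _))
    have hexp_le : Real.exp (G r - G δ) ≤ c * E := by
      rw [show G r - G δ = -G δ + G r by ring, Real.exp_add, ← hc_def, hE_def]
      exact mul_le_mul_of_nonneg_left
        (Real.exp_le_exp.mpr ((le_abs_self _).trans (hGδa r hr))) hc.le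
    have hXeq : (r / δ) ^ β = r ^ β / δ ^ β := Real.div_rpow hr0.le hδ.le β
    rw [habs, hXeq]
    calc Pδ * (r ^ β / δ ^ β) * Real.exp (G r - G δ)
        ≤ Pδ * (r ^ β / δ ^ β) * (c * E) :=
          mul_le_mul_of_nonneg_left hexp_le
            (mul_nonneg hPδ.le (div_nonneg hrb (Real.rpow_nonneg hδ.le _)))
      _ = (c * E / δ ^ β) * (Pδ * r ^ β) := by ring
      _ ≤ (c * M * E + c * E / δ ^ β + 1) * (Pδ * r ^ β) := by
          refine mul_le_mul_of_nonneg_right ?_ (mul_nonneg hPδ.le hrb)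
          have h1' : (0:ℝ) < c * M * E :=
            mul_pos (mul_pos hc hM) (lt_of_lt_of_le one_pos hE1)
          linarith
      _ = (c * M * E + c * E / δ ^ β + 1) * Pδ * r ^ β := by ring
  have hCpos : (0:ℝ) < c * M * E + c * E / δ ^ β + 1 := by
    have h1' : (0:ℝ) < c * M * E := mul_pos (mul_pos hc hM) (lt_of_lt_of_le one_pos hE1)
    have h2' : (0:ℝ) < c * E / δ ^ β :=
      div_pos (mul_pos hc (lt_of_lt_of_le one_pos hE1)) (Real.rpow_pos_of_pos hδ β)
    linarith
  refine ⟨c, hc, c * M * E + c * E / δ ^ β + 1, hCpos, hmain, ?_, hglob⟩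
  have hbd : ∀ᶠ r in 𝓝[>] (0:ℝ), ‖Pvac d δ Pδ U r‖
      ≤ (c * M * E + c * E / δ ^ β + 1) * Pδ * r ^ β := by
    filter_upwards [Ioc_mem_nhdsGT hδ] with r hr
    rw [Real.norm_eq_abs]
    exact hglob r hr
  refine squeeze_zero_norm' hbd ?_
  have hcont : ContinuousAt (fun r : ℝ => r ^ β) 0 :=
    Real.continuousAt_rpow_const 0 β (Or.inr hβ.le)
  have hT : Tendsto (fun r : ℝ => (c * M * E + c * E / δ ^ β + 1) * Pδ * r ^ β)
      (𝓝[>] (0:ℝ)) (𝓝 ((c * M * E + c * E / δ ^ β + 1) * Pδ * (0:ℝ) ^ β)) :=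
    ((hcont.tendsto.mono_left nhdsWithin_le_nhds).const_mul _)
  rwa [Real.zero_rpow hβ.ne', mul_zero] at hT
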